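/- For the C_n^(1) crystal B^{1,l} (l odd) with the given explicit crystal structure, the values ε_0(b) = (l−s(b))/2 + max(x_1−x̄_1, 0) and φ_0(b) = (l−s(b))/2 + max(x̄_1−x_1, 0) are correct, i.e., ε_0(b) is the maximal n with ẽ_0^n b ≠ 0 and φ_0(b) is the maximal n with f̃_0^n b ≠ 0. -/

import Mathlib

/-- Iterated application of a partial (crystal) operator. -/
def iterOpt {B : Type*} (g : B → Option B) : ℕ → B → Option B
  | 0, b => some b
  | n + 1, b => (g b).bind (iterOpt g n)

/-- `s(b) = ∑_{i=1}^n (x_i + x̄_i)` for `b = (x, x̄)` (coordinates are the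
values on `1,…,n`). -/
def sC (n : ℕ) (b : (ℕ → ℕ) × (ℕ → ℕ)) : ℕ :=
  (∑ i ∈ Finset.Icc 1 n, b.1 i) + ∑ i ∈ Finset.Icc 1 n, b.2 i

/-- Membership in the `C_n^{(1)}`-crystal `B^{1,l}`:
`x_i, x̄_i ∈ ℤ_{≥0}` supported on `1,…,n` and `s(b) ∈ {l, l−2, …, 1}`. -/
def ValidC (n l : ℕ) (b : (ℕ → ℕ) × (ℕ → ℕ)) : Prop :=
  (∀ i, i = 0 ∨ n < i → b.1 i = 0 ∧ b.2 i = 0) ∧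
    sC n b % 2 = l % 2 ∧ 1 ≤ sC n b ∧ sC n b ≤ l

/-- The operator `ẽ_0` on `B^{1,l}` of type `C_n^{(1)}`. -/
def e0C (n l : ℕ) (b : (ℕ → ℕ) × (ℕ → ℕ)) : Option ((ℕ → ℕ) × (ℕ → ℕ)) :=
  if b.2 1 + 2 ≤ b.1 1 then
    some (Function.update b.1 1 (b.1 1 - 2), b.2)
  else if b.1 1 = b.2 1 + 1 then
    some (Function.update b.1 1 (b.1 1 - 1), Function.update b.2 1 (b.2 1 + 1))
  else if sC n b + 2 ≤ l then
    some (b.1, Function.update b.2 1 (b.2 1 + 2))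
  else none

/-- The operator `f̃_0` on `B^{1,l}` of type `C_n^{(1)}`. -/
def f0C (n l : ℕ) (b : (ℕ → ℕ) × (ℕ → ℕ)) : Option ((ℕ → ℕ) × (ℕ → ℕ)) :=
  if b.2 1 ≤ b.1 1 then
    (if sC n b + 2 ≤ l then some (Function.update b.1 1 (b.1 1 + 2), b.2)
     else none)
  else if b.1 1 + 1 = b.2 1 then
    some (Function.update b.1 1 (b.1 1 + 1), Function.update b.2 1 (b.2 1 - 1))
  else
    some (b.1, Function.update b.2 1 (b.2 1 - 2))


lemma iter_ne_none {B : Type*} (g : B → Option B) (V : B → Prop) (eps : B → ℕ)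
    (h : ∀ b, V b → (g b = none ∧ eps b = 0) ∨
      ∃ b', g b = some b' ∧ V b' ∧ eps b' + 1 = eps b) :
    ∀ m b, V b → (iterOpt g m b ≠ none ↔ m ≤ eps b) := by
  intro m
  induction m with
  | zero => intro b hb; simp [iterOpt]
  | succ k ih =>
    intro b hb
    rcases h b hb with ⟨hg, he⟩ | ⟨b', hg, hb', he⟩
    · simp [iterOpt, hg, he]
    · simp only [iterOpt, hg, Option.bind_some]
      rw [ih b' hb']
      omega

lemma sC_update1 (n : ℕ) (hn : 1 ≤ n) (b : (ℕ → ℕ) × (ℕ → ℕ)) (v w : ℕ) :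
    sC n (Function.update b.1 1 v, Function.update b.2 1 w) + b.1 1 + b.2 1
      = sC n b + v + w := by
  have h1 : (1:ℕ) ∈ Finset.Icc 1 n := by simp [hn]
  unfold sC
  rw [Finset.sum_update_of_mem h1, Finset.sum_update_of_mem h1,
    Finset.sum_eq_sum_sdiff_singleton_add h1 b.1,
    Finset.sum_eq_sum_sdiff_singleton_add h1 b.2]
  ring

lemma le_sC (n : ℕ) (hn : 1 ≤ n) (b : (ℕ → ℕ) × (ℕ → ℕ)) :
    b.1 1 + b.2 1 ≤ sC n b := by
  have h1 : (1:ℕ) ∈ Finset.Icc 1 n := by simp [hn]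
  have h2 := Finset.single_le_sum (f := b.1) (fun i _ => Nat.zero_le (b.1 i)) h1
  have h3 := Finset.single_le_sum (f := b.2) (fun i _ => Nat.zero_le (b.2 i)) h1
  unfold sC; omega

lemma valid_update (n l : ℕ) (hn : 1 ≤ n) (b : (ℕ → ℕ) × (ℕ → ℕ))
    (hb : ValidC n l b) (v w : ℕ)
    (hpar : (v + w) % 2 = (b.1 1 + b.2 1) % 2)
    (h1 : 1 ≤ sC n b + (v + w) - (b.1 1 + b.2 1))
    (h2 : sC n b + (v + w) - (b.1 1 + b.2 1) ≤ l) :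
    ValidC n l (Function.update b.1 1 v, Function.update b.2 1 w) := by
  obtain ⟨hsupp, hp, ha, hbl⟩ := hb
  have hs := sC_update1 n hn b v w
  have hle := le_sC n hn b
  refine ⟨?_, by omega, by omega, by omega⟩
  intro i hi
  have hi1 : i ≠ 1 := by omega
  simp only [Function.update_of_ne hi1]
  exact hsupp i hi

lemma e0_step (n l : ℕ) (hn : 1 ≤ n) (hl : l % 2 = 1) (b : (ℕ → ℕ) × (ℕ → ℕ))
    (hb : ValidC n l b) :
    (e0C n l b = none ∧ (l - sC n b) / 2 + (b.1 1 - b.2 1) = 0) ∨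
      ∃ b', e0C n l b = some b' ∧ ValidC n l b' ∧
        ((l - sC n b') / 2 + (b'.1 1 - b'.2 1)) + 1
          = (l - sC n b) / 2 + (b.1 1 - b.2 1) := by
  obtain ⟨hsupp, hp, ha, hbl⟩ := hb
  have hle := le_sC n hn b
  have hupd2 : Function.update b.2 1 (b.2 1) = b.2 := Function.update_eq_self 1 b.2
  have hupd1 : Function.update b.1 1 (b.1 1) = b.1 := Function.update_eq_self 1 b.1
  unfold e0C
  split_ifs with h1 h2 h3
  · right
    refine ⟨_, rfl, ?_, ?_⟩
    · have := valid_update n l hn b ⟨hsupp, hp, ha, hbl⟩ (b.1 1 - 2) (b.2 1)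
        (by omega) (by omega) (by omega)
      rwa [hupd2] at this
    · have hs := sC_update1 n hn b (b.1 1 - 2) (b.2 1)
      rw [hupd2] at hs
      simp only [Function.update_self]
      omega
  · right
    refine ⟨_, rfl, ?_, ?_⟩
    · exact valid_update n l hn b ⟨hsupp, hp, ha, hbl⟩ (b.1 1 - 1) (b.2 1 + 1)
        (by omega) (by omega) (by omega)
    · have hs := sC_update1 n hn b (b.1 1 - 1) (b.2 1 + 1)
      simp only [Function.update_self]
      omega
  · right
    refine ⟨_, rfl, ?_, ?_⟩
    · have := valid_update n l hn b ⟨hsupp, hp, ha, hbl⟩ (b.1 1) (b.2 1 + 2)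
        (by omega) (by omega) (by omega)
      rwa [hupd1] at this
    · have hs := sC_update1 n hn b (b.1 1) (b.2 1 + 2)
      rw [hupd1] at hs
      simp only [Function.update_self]
      omega
  · left
    exact ⟨rfl, by omega⟩

lemma f0_step (n l : ℕ) (hn : 1 ≤ n) (hl : l % 2 = 1) (b : (ℕ → ℕ) × (ℕ → ℕ))
    (hb : ValidC n l b) :
    (f0C n l b = none ∧ (l - sC n b) / 2 + (b.2 1 - b.1 1) = 0) ∨
      ∃ b', f0C n l b = some b' ∧ ValidC n l b' ∧
        ((l - sC n b') / 2 + (b'.2 1 - b'.1 1)) + 1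
          = (l - sC n b) / 2 + (b.2 1 - b.1 1) := by
  obtain ⟨hsupp, hp, ha, hbl⟩ := hb
  have hle := le_sC n hn b
  have hupd2 : Function.update b.2 1 (b.2 1) = b.2 := Function.update_eq_self 1 b.2
  have hupd1 : Function.update b.1 1 (b.1 1) = b.1 := Function.update_eq_self 1 b.1
  unfold f0C
  split_ifs with h1 h2 h3
  · right
    refine ⟨_, rfl, ?_, ?_⟩
    · have := valid_update n l hn b ⟨hsupp, hp, ha, hbl⟩ (b.1 1 + 2) (b.2 1)
        (by omega) (by omega) (by omega)
      rwa [hupd2] at this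
    · have hs := sC_update1 n hn b (b.1 1 + 2) (b.2 1)
      rw [hupd2] at hs
      simp only [Function.update_self]
      omega
  · left
    exact ⟨rfl, by omega⟩
  · right
    refine ⟨_, rfl, ?_, ?_⟩
    · exact valid_update n l hn b ⟨hsupp, hp, ha, hbl⟩ (b.1 1 + 1) (b.2 1 - 1)
        (by omega) (by omega) (by omega)
    · have hs := sC_update1 n hn b (b.1 1 + 1) (b.2 1 - 1)
      simp only [Function.update_self]
      omega
  · right
    refine ⟨_, rfl, ?_, ?_⟩
    · have := valid_update n l hn b ⟨hsupp, hp, ha, hbl⟩ (b.1 1) (b.2 1 - 2)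
        (by omega) (by omega) (by omega)
      rwa [hupd1] at this
    · have hs := sC_update1 n hn b (b.1 1) (b.2 1 - 2)
      rw [hupd1] at hs
      simp only [Function.update_self]
      omega

/-- in the `C_n^{(1)}` crystal `B^{1,l}` (`l` odd),
`ε_0(b) = (l−s(b))/2 + (x_1−x̄_1)_+` is the maximal `n` with `ẽ_0^n b ≠ 0`,
and `φ_0(b) = (l−s(b))/2 + (x̄_1−x_1)_+` is the maximal `n` with
`f̃_0^n b ≠ 0`. -/
theorem stmt13 (n l : ℕ) (hn : 1 ≤ n) (hl : l % 2 = 1) :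
    ∀ b, ValidC n l b →
      (∀ m, iterOpt (e0C n l) m b ≠ none ↔ m ≤ (l - sC n b) / 2 + (b.1 1 - b.2 1)) ∧
      (∀ m, iterOpt (f0C n l) m b ≠ none ↔ m ≤ (l - sC n b) / 2 + (b.2 1 - b.1 1)) := by
  intro b hb
  constructor
  · intro m
    exact iter_ne_none (e0C n l) (ValidC n l)
      (fun b => (l - sC n b) / 2 + (b.1 1 - b.2 1))
      (fun b hb => e0_step n l hn hl b hb) m b hb
  · intro m
    exact iter_ne_none (f0C n l) (ValidC n l)
      (fun b => (l - sC n b) / 2 + (b.2 1 - b.1 1))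
      (fun b hb => f0_step n l hn hl b hb) m b hb
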